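/- The generalized Laguerre polynomial L_n^α satisfies the Sturm–Liouville differential equation x·(L_n^α)''(x) + (α + 1 − x)·(L_n^α)'(x) + n·L_n^α(x) = 0 for all x. -/

import Mathlib

/-- Generalized binomial coefficient C(z, m) for real z. -/
noncomputable def genBinom (z : ℝ) (m : ℕ) : ℝ :=
  (∏ i ∈ Finset.range m, (z - i)) / m.factorial

/-- Generalized Laguerre polynomial L_n^α(x) = Σ_{k=0}^n (-1)^k C(n+α, n-k) x^k / k!. -/
noncomputable def laguerre (α : ℝ) (n : ℕ) (x : ℝ) : ℝ :=
  ∑ k ∈ Finset.range (n + 1), (-1 : ℝ) ^ k * genBinom (n + α) (n - k) * x ^ k / k.factorial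

noncomputable def lagC (α : ℝ) (n k : ℕ) : ℝ :=
  (-1 : ℝ) ^ k * genBinom ((n : ℝ) + α) (n - k) / (k.factorial : ℝ)

lemma laguerre_eq (α : ℝ) (n : ℕ) :
    laguerre α n = fun x => ∑ k ∈ Finset.range (n + 1), lagC α n k * x ^ k := by
  funext x
  unfold laguerre lagC
  exact Finset.sum_congr rfl fun k _ => by ring

lemma genBinom_succ (z : ℝ) (m : ℕ) :
    genBinom z (m + 1) = genBinom z m * (z - m) / (m + 1) := by
  unfold genBinom
  rw [Finset.prod_range_succ, Nat.factorial_succ]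
  push_cast
  rw [div_mul_eq_mul_div, div_div, mul_comm ((m.factorial : ℝ)) ((m : ℝ) + 1)]

lemma lag_key (α : ℝ) (n k : ℕ) (hk : k < n) :
    ((k : ℝ) + 1) * ((k : ℝ) + 1 + α) * lagC α n (k + 1) + ((n : ℝ) - k) * lagC α n k = 0 := by
  obtain ⟨m, hm⟩ : ∃ m, n - k = m + 1 := ⟨n - k - 1, by omega⟩
  have h1 : n - (k + 1) = m := by omega
  have hn : n = m + 1 + k := by omega
  unfold lagC
  rw [hm, h1, genBinom_succ, hn]
  have hk0 : (k.factorial : ℝ) ≠ 0 := Nat.cast_ne_zero.2 k.factorial_ne_zero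
  have hm0 : (m : ℝ) + 1 ≠ 0 := by positivity
  rw [pow_succ, Nat.factorial_succ]
  push_cast
  field_simp
  ring

lemma hasDerivAt_lag (α : ℝ) (n : ℕ) (x : ℝ) :
    HasDerivAt (laguerre α n)
      (∑ k ∈ Finset.range (n + 1), lagC α n k * ((k : ℝ) * x ^ (k - 1))) x := by
  rw [laguerre_eq]
  exact HasDerivAt.fun_sum fun k _ => (hasDerivAt_pow k x).const_mul _

lemma deriv_lag (α : ℝ) (n : ℕ) :
    deriv (laguerre α n)
      = fun x => ∑ k ∈ Finset.range (n + 1), lagC α n k * ((k : ℝ) * x ^ (k - 1)) :=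
  funext fun x => (hasDerivAt_lag α n x).deriv

lemma deriv2_lag (α : ℝ) (n : ℕ) (x : ℝ) :
    deriv (deriv (laguerre α n)) x
      = ∑ k ∈ Finset.range (n + 1),
          lagC α n k * ((k : ℝ) * (((k - 1 : ℕ) : ℝ) * x ^ (k - 1 - 1))) := by
  rw [deriv_lag]
  exact HasDerivAt.deriv <| HasDerivAt.fun_sum fun k _ =>
    (((hasDerivAt_pow (k - 1) x).const_mul (k : ℝ)).const_mul (lagC α n k))

/-- Sturm-Liouville equation for generalized Laguerre polynomials:
x (L_n^α)''(x) + (α + 1 - x)(L_n^α)'(x) + n L_n^α(x) = 0. -/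
theorem laguerre_sturm_liouville (α : ℝ) (hα : -1 < α) (n : ℕ) (x : ℝ) :
    x * deriv (deriv (laguerre α n)) x + (α + 1 - x) * deriv (laguerre α n) x
      + n * laguerre α n x = 0 := by
  rw [deriv2_lag, deriv_lag, laguerre_eq]
  simp only
  rw [Finset.mul_sum, Finset.mul_sum, Finset.mul_sum, ← Finset.sum_add_distrib,
    ← Finset.sum_add_distrib]
  set g : ℕ → ℝ := fun k => (k : ℝ) * ((k : ℝ) + α) * lagC α n k * x ^ (k - 1) with hg
  have hterm : ∀ k ∈ Finset.range (n + 1),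
      x * (lagC α n k * ((k : ℝ) * (((k - 1 : ℕ) : ℝ) * x ^ (k - 1 - 1))))
        + (α + 1 - x) * (lagC α n k * ((k : ℝ) * x ^ (k - 1)))
        + (n : ℝ) * (lagC α n k * x ^ k)
      = g k + ((n : ℝ) - k) * lagC α n k * x ^ k := by
    intro k _
    match k with
    | 0 => simp [hg]
    | 1 => simp only [hg]; norm_num; ring
    | (j + 2) =>
      simp only [hg, Nat.add_sub_cancel, show j + 2 - 1 = j + 1 from rfl,
        show j + 1 - 1 = j from rfl, pow_succ]
      push_cast
      ring
  rw [Finset.sum_congr rfl hterm, Finset.sum_add_distrib, Finset.sum_range_succ' _ n,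
    Finset.sum_range_succ]
  have h1 : ∀ k ∈ Finset.range n,
      ((n : ℝ) - k) * lagC α n k * x ^ k = -(g (k + 1)) := by
    intro k hk
    have hkey := lag_key α n k (Finset.mem_range.1 hk)
    have h2 : ((n : ℝ) - k) * lagC α n k
        = -(((k : ℝ) + 1) * ((k : ℝ) + 1 + α) * lagC α n (k + 1)) := by linarith
    simp only [hg, Nat.add_sub_cancel]
    rw [h2]
    push_cast
    ring
  rw [Finset.sum_congr rfl h1]
  have hg0 : g 0 = 0 := by simp [hg]
  have hnn : ((n : ℝ) - n) = 0 := sub_self _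
  rw [hg0, hnn, Finset.sum_neg_distrib]
  ring
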